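/- Let R be a symmetric positive-definite correlation matrix with Cholesky factor L = (l_{ji}). For fixed k < p, the semi-partial correlations ρ_{1p}, ρ_{2p(1)}, ..., ρ_{kp(1,...,k−1)} (i.e., l_{p1}, ..., l_{pk}) are all zero if and only if the ordinary correlations ρ_{1p}, ρ_{2p}, ..., ρ_{kp} (i.e., R_{1p},...,R_{kp}) are all zero. -/

import Mathlib

open Matrix

/-- Leading `i × i` principal submatrix. -/
def lead {n : ℕ} (R : Matrix (Fin n) (Fin n) ℝ) (i : ℕ) (h : i ≤ n) :
    Matrix (Fin i) (Fin i) ℝ :=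
  R.submatrix (Fin.castLE h) (Fin.castLE h)

/-- First `i` entries of column `j` of `R`. -/
def colv {n : ℕ} (R : Matrix (Fin n) (Fin n) ℝ) (i : ℕ) (h : i ≤ n) (j : Fin n) :
    Fin i → ℝ :=
  fun k => R (Fin.castLE h k) j


/-- The semi-partial correlation coefficient `ρ_{k+1,j(1,…,k)}` (0-indexed `k`,
0-indexed column `j`):
`(R_{kj} − ρ_k^{*j} R_{k−1}⁻¹ ρ_kᵀ)/√(1 − ρ_k R_{k−1}⁻¹ ρ_kᵀ)`. -/
noncomputable def spc {n : ℕ} (R : Matrix (Fin n) (Fin n) ℝ) (k : ℕ) (hk : k < n)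
    (j : Fin n) : ℝ :=
  (R ⟨k, hk⟩ j - colv R k hk.le j ⬝ᵥ (lead R k hk.le)⁻¹ *ᵥ colv R k hk.le ⟨k, hk⟩) /
    Real.sqrt
      (1 - colv R k hk.le ⟨k, hk⟩ ⬝ᵥ (lead R k hk.le)⁻¹ *ᵥ colv R k hk.le ⟨k, hk⟩)
lemma sum_castLE {n i : ℕ} (h : i ≤ n) (f : Fin n → ℝ)
    (hf : ∀ j : Fin n, ¬(j : ℕ) < i → f j = 0) :
    ∑ j, f j = ∑ j : Fin i, f (Fin.castLE h j) := by
  classical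
  have himg : ∑ j : Fin i, f (Fin.castLE h j)
      = ∑ x ∈ Finset.univ.image (Fin.castLE h), f x := by
    rw [Finset.sum_image (fun a _ b _ hab => Fin.castLE_injective h hab)]
  rw [himg]
  symm
  apply Finset.sum_subset (Finset.subset_univ _)
  intro x _ hx
  apply hf
  intro hlt
  exact hx (Finset.mem_image.2 ⟨⟨x, hlt⟩, Finset.mem_univ _, rfl⟩)

/-- The quadratic form of `R` on a vector supported on the first `i`
coordinates equals the quadratic form of the leading submatrix. -/
lemma quadform_lead {n i : ℕ} (R : Matrix (Fin n) (Fin n) ℝ) (h : i ≤ n)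
    (y : Fin n → ℝ) (hy : ∀ j : Fin n, ¬(j : ℕ) < i → y j = 0) :
    y ⬝ᵥ R *ᵥ y = (fun a => y (Fin.castLE h a)) ⬝ᵥ
      (lead R i h) *ᵥ (fun a => y (Fin.castLE h a)) := by
  unfold dotProduct mulVec lead
  simp only [submatrix_apply]
  rw [sum_castLE h _ (fun j hj => by rw [hy j hj, zero_mul])]
  congr 1
  funext a
  congr 1
  exact sum_castLE h _ (fun j hj => by rw [hy j hj, mul_zero])

lemma lead_posDef {n i : ℕ} {R : Matrix (Fin n) (Fin n) ℝ} (hR : R.PosDef)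
    (h : i ≤ n) : (lead R i h).PosDef := by
  refine posDef_iff_dotProduct_mulVec.mpr ⟨?_, ?_⟩
  · exact hR.1.submatrix _
  · intro x hx
    set y : Fin n → ℝ := fun j => if hj : (j : ℕ) < i then x ⟨j, hj⟩ else 0 with hy
    have hyv : ∀ a : Fin i, y (Fin.castLE h a) = x a := by
      intro a
      simp [hy, a.isLt]
    have hy0 : ∀ j : Fin n, ¬(j : ℕ) < i → y j = 0 := fun j hj => dif_neg hj
    have hyne : y ≠ 0 := by
      intro h0
      apply hx
      funext a
      have := congrFun h0 (Fin.castLE h a)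
      rwa [hyv] at this
    have := hR.dotProduct_mulVec_pos hyne
    rw [show (star y) = y from rfl, quadform_lead R h y hy0] at this
    simpa [funext hyv] using this

lemma schur_pos {n m : ℕ} {R : Matrix (Fin n) (Fin n) ℝ} (hR : R.PosDef)
    (hdiag : ∀ k, R k k = 1) (hm : m < n) :
    0 < 1 - colv R m hm.le ⟨m, hm⟩ ⬝ᵥ (lead R m hm.le)⁻¹ *ᵥ colv R m hm.le ⟨m, hm⟩ := by
  set A := lead R m hm.le with hA
  set v := colv R m hm.le ⟨m, hm⟩ with hv
  set u := A⁻¹ *ᵥ v with hu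
  have hApd : A.PosDef := lead_posDef hR hm.le
  have hAu : A *ᵥ u = v := by
    rw [hu, mulVec_mulVec, Matrix.mul_nonsing_inv _ hApd.det_pos.ne'.isUnit, one_mulVec]
  have hm1 : m + 1 ≤ n := hm
  set y : Fin n → ℝ := fun j =>
    if hj : (j : ℕ) < m then -(u ⟨j, hj⟩) else if (j : ℕ) = m then 1 else 0 with hy
  have hy0 : ∀ j : Fin n, ¬(j : ℕ) < m + 1 → y j = 0 := by
    intro j hj
    simp only [hy]
    rw [dif_neg (by omega), if_neg (by omega)]
  have hyne : y ≠ 0 := by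
    intro h0
    have := congrFun h0 ⟨m, hm⟩
    simp [hy] at this
  have hpos := hR.dotProduct_mulVec_pos hyne
  rw [show (star y) = y from rfl, quadform_lead R hm1 y hy0] at hpos
  set z : Fin (m+1) → ℝ := fun a => y (Fin.castLE hm1 a) with hz
  set B : Matrix (Fin (m+1)) (Fin (m+1)) ℝ := lead R (m+1) hm1 with hB
  have hz2 : ∀ a : Fin m, z a.castSucc = -u a := by
    intro a
    simp only [hz, hy, Fin.castLE, Fin.coe_castSucc, a.isLt, dif_pos]
  have hz1 : z (Fin.last m) = 1 := by
    simp [hz, hy, Fin.castLE]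
  have hsym : ∀ i j, R i j = R j i := by
    intro i j
    conv_lhs => rw [← hR.1]
    simp [conjTranspose_apply]
  have hB1 : ∀ a b : Fin m, B a.castSucc b.castSucc = A a b := fun a b => rfl
  have hB2 : ∀ a : Fin m, B a.castSucc (Fin.last m) = v a := fun a => rfl
  have hB3 : ∀ b : Fin m, B (Fin.last m) b.castSucc = v b := by
    intro b
    show R _ _ = R _ _
    rw [hsym]
    rfl
  have hB4 : B (Fin.last m) (Fin.last m) = 1 := hdiag _
  have hAu' : ∀ a : Fin m, ∑ b, A a b * u b = v a := fun a => congrFun hAu a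
  have key : z ⬝ᵥ B *ᵥ z = 1 - v ⬝ᵥ u := by
    unfold dotProduct mulVec dotProduct
    simp only [Fin.sum_univ_castSucc, hz1, hz2, hB1, hB2, hB3, hB4,
      mul_neg, neg_mul, mul_one, one_mul]
    have inner0 : ∀ a : Fin m, (∑ b : Fin m, -(A a b * u b)) + v a = 0 := by
      intro a
      rw [Finset.sum_neg_distrib, hAu' a]
      ring
    rw [Finset.sum_congr rfl (fun a _ => by rw [inner0 a, mul_zero]),
      Finset.sum_neg_distrib]
    simp only [neg_zero, Finset.sum_const, smul_zero, zero_add]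
    rw [Finset.sum_neg_distrib]
    ring
  rw [key] at hpos
  linarith

/-- Remark of Section 5: for `k < p`, the first `k` semi-partial correlations
`ρ_{1p}, ρ_{2p(1)}, …, ρ_{kp(1,…,k−1)}` (the first `k` entries of row `p` of the
Cholesky factor) vanish iff the ordinary correlations `R_{1p}, …, R_{kp}`
vanish (0-indexed below). -/
theorem stmt17 {n : ℕ} (R : Matrix (Fin n) (Fin n) ℝ) (hR : R.PosDef)
    (hdiag : ∀ k, R k k = 1) (p : Fin n) (k : ℕ) (hk : k < (p : ℕ)) :
    (∀ (i : ℕ) (hi : i < k),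
        spc R i (by have := p.isLt; omega) p = 0) ↔
      (∀ (i : ℕ) (hi : i < k), R ⟨i, by have := p.isLt; omega⟩ p = 0) := by
  have hpn := p.isLt
  constructor
  · intro H i hi
    induction i using Nat.strong_induction_on with
    | _ i IH =>
      have hin : i < n := by omega
      have hcol : colv R i hin.le p = 0 := by
        funext j
        exact IH j j.isLt (by omega)
      have hs := H i hi
      rw [spc, hcol, zero_dotProduct, sub_zero] at hs
      have hpos := schur_pos hR hdiag hin
      rcases div_eq_zero_iff.mp hs with h0 | h0
      · exact h0
      · exact absurd h0 (Real.sqrt_ne_zero'.mpr hpos)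
  · intro H i hi
    have hin : i < n := by omega
    have hcol : colv R i hin.le p = 0 := by
      funext j
      exact H j (by omega)
    rw [spc, hcol, zero_dotProduct, sub_zero, H i hi, zero_div]
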